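/- Comparison from the maximum principle: if G is a locally finite connected weighted graph with mean curvature H(x) = Δd(·,x₀)(x) ≤ C for some vertex x₀ and constant C ≥ 0, and if u(t,x) is a bounded solution of the heat equation ∂_t u = Δu on [0,∞) × V with initial data u(0,·) = u₀ bounded, then sup_{x∈V} |u(t,x)| ≤ sup_{x∈V} |u₀(x)| for every t ≥ 0. -/

import Mathlib

open Finset Real

/-- Graph Laplacian `Δf(x) = (1/d x) * Σ_{y ∈ N x} μ x y * (f y - f x)`. -/
noncomputable def glap {V : Type*} (N : V → Finset V) (μ : V → V → ℝ) (d : V → ℝ)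
    (f : V → ℝ) (x : V) : ℝ :=
  (1 / d x) * ∑ y ∈ N x, μ x y * (f y - f x)

/-- Gradient norm squared `|∇f|²(x)`. -/
noncomputable def ggrad {V : Type*} (N : V → Finset V) (μ : V → V → ℝ) (d : V → ℝ)
    (f : V → ℝ) (x : V) : ℝ :=
  (1 / d x) * ∑ y ∈ N x, μ x y * (f y - f x) ^ 2

/-- Pointwise inner product `(∇f, ∇g)(x)`. -/
noncomputable def ginner {V : Type*} (N : V → Finset V) (μ : V → V → ℝ) (d : V → ℝ)
    (f g : V → ℝ) (x : V) : ℝ :=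
  (1 / d x) * ∑ y ∈ N x, μ x y * (f y - f x) * (g y - g x)

/-- Hessian norm squared `|D²f|²(x)`. -/
noncomputable def ghess {V : Type*} (N : V → Finset V) (μ : V → V → ℝ) (d : V → ℝ)
    (f : V → ℝ) (x : V) : ℝ :=
  (1 / d x) * ∑ y ∈ N x, (μ x y / d y) * ∑ z ∈ N y, μ y z * (f x - 2 * f y + f z) ^ 2

/-- Carré du champ `Γ(f,g)(x) = (1/2)[Δ(fg) - fΔg - gΔf](x)`. -/
noncomputable def ggamma {V : Type*} (N : V → Finset V) (μ : V → V → ℝ) (d : V → ℝ)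
    (f g : V → ℝ) (x : V) : ℝ :=
  (1 / 2) * (glap N μ d (fun y => f y * g y) x - f x * glap N μ d g x - g x * glap N μ d f x)

/-- Iterated carré du champ `Γ₂(f,f)(x) = (1/2)[ΔΓ(f,f) - 2Γ(f,Δf)](x)`. -/
noncomputable def ggamma2 {V : Type*} (N : V → Finset V) (μ : V → V → ℝ) (d : V → ℝ)
    (f : V → ℝ) (x : V) : ℝ :=
  (1 / 2) * (glap N μ d (ggamma N μ d f f) x - 2 * ggamma N μ d f (glap N μ d f) x)

/-- one-sided Fermat: at an interior-from-the-left max on `Icc 0 T`, derivative `≥ 0`. -/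
lemma deriv_nonneg_of_isMaxOn_Icc {f : ℝ → ℝ} {f' T t : ℝ} (hT : t ∈ Set.Icc (0:ℝ) T)
    (ht : 0 < t) (hf : HasDerivAt f f' t) (hmax : IsMaxOn f (Set.Icc (0:ℝ) T) t) :
    0 ≤ f' := by
  have hseg : segment ℝ t 0 ⊆ Set.Icc (0:ℝ) T :=
    (convex_Icc (0:ℝ) T).segment_subset hT (Set.left_mem_Icc.2 (le_trans hT.1 hT.2))
  have hy : (0 : ℝ) - t ∈ posTangentConeAt (Set.Icc (0:ℝ) T) t :=
    sub_mem_posTangentConeAt_of_segment_subset hseg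
  have h1 := hmax.localize.hasFDerivWithinAt_nonpos
    (hf.hasDerivWithinAt.hasFDerivWithinAt) hy
  simp only [ContinuousLinearMap.smulRight_apply, ContinuousLinearMap.one_apply,
    ContinuousLinearMap.toSpanSingleton_apply, smul_eq_mul, zero_sub, neg_mul] at h1
  nlinarith

/-- finite balls in a locally finite connected graph -/
lemma ball_finite {V : Type*} (G : SimpleGraph V) (hconn : G.Connected)
    (N : V → Finset V) (hadj : ∀ x y, y ∈ N x ↔ G.Adj x y) (x₀ : V) :
    ∀ r : ℕ, {x : V | G.dist x x₀ ≤ r}.Finite := by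
  intro r
  induction r with
  | zero =>
    refine Set.Finite.subset (Set.finite_singleton x₀) ?_
    intro x hx
    simp only [Set.mem_setOf_eq, Nat.le_zero] at hx
    simp [(hconn.dist_eq_zero_iff).mp hx]
  | succ r ih =>
    have hsub : {x : V | G.dist x x₀ ≤ r + 1} ⊆
        {x : V | G.dist x x₀ ≤ r} ∪ ⋃ y ∈ {x : V | G.dist x x₀ ≤ r}, (N y : Set V) := by
      intro y hy
      simp only [Set.mem_setOf_eq] at hy
      by_cases h : G.dist y x₀ ≤ r
      · exact Set.mem_union_left _ h
      · obtain ⟨p, hp⟩ := hconn.exists_walk_length_eq_dist y x₀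
        have hlen : p.length = r + 1 := by omega
        cases p with
        | nil => simp at hlen
        | @cons _ b _ hadj' q =>
          right
          refine Set.mem_biUnion (x := b) ?_ ?_
          · have := SimpleGraph.dist_le q
            simp only [SimpleGraph.Walk.length_cons] at hlen
            simp only [Set.mem_setOf_eq]
            omega
          · exact (hadj b y).mpr hadj'.symm
    exact (ih.union (ih.biUnion (fun y _ => (N y).finite_toSet))).subset hsub

lemma core_max {V : Type*} (G : SimpleGraph V) (hconn : G.Connected)
    (N : V → Finset V) (μ : V → V → ℝ) (d : V → ℝ)
    (hadj : ∀ x y, y ∈ N x ↔ G.Adj x y)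
    (hnn : ∀ x y, 0 ≤ μ x y) (hdpos : ∀ x, 0 < d x)
    (x₀ : V) (C : ℝ) (hC : 0 ≤ C)
    (hH : ∀ x, glap N μ d (fun y => (G.dist y x₀ : ℝ)) x ≤ C)
    (u : ℝ → V → ℝ)
    (hheat : ∀ x, ∀ t ≥ (0:ℝ), HasDerivAt (fun s => u s x) (glap N μ d (u t) x) t)
    (hcont : ∀ x, Continuous fun t => u t x)
    (T : ℝ) (hT : 0 < T) (M : ℝ) (hM : ∀ t ∈ Set.Icc (0:ℝ) T, ∀ x, |u t x| ≤ M)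
    (M₀ : ℝ) (hM₀ : 0 ≤ M₀) (hu0 : ∀ x, u 0 x ≤ M₀) :
    ∀ t ∈ Set.Icc (0:ℝ) T, ∀ x, u t x ≤ M₀ := by
  set ρ : V → ℝ := fun x => (G.dist x x₀ : ℝ) with hρdef
  have hρ0 : ∀ x, 0 ≤ ρ x := fun x => Nat.cast_nonneg _
  have hMnn : 0 ≤ M := le_trans (abs_nonneg _) (hM 0 ⟨le_refl 0, hT.le⟩ x₀)
  suffices key : ∀ ε > (0:ℝ), ∀ t ∈ Set.Icc (0:ℝ) T, ∀ x, u t x ≤ M₀ + ε * (ρ x + (C+1)*t + 1) by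
    intro t ht x
    by_contra hcon
    push_neg at hcon
    have hK : 0 < ρ x + (C+1)*t + 1 := by
      have := mul_nonneg (by linarith : (0:ℝ) ≤ C+1) ht.1
      nlinarith [hρ0 x]
    have hδ : 0 < (u t x - M₀) / (2 * (ρ x + (C+1)*t + 1)) := by
      apply div_pos (by linarith) (by linarith)
    have hkey := key _ hδ t ht x
    have heq : (u t x - M₀) / (2 * (ρ x + (C+1)*t + 1)) * (ρ x + (C+1)*t + 1)
        = (u t x - M₀) / 2 := by
      field_simp
    rw [heq] at hkey
    linarith
  intro ε hε
  -- the finite set S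
  have hfin : {x : V | ρ x ≤ (M + M₀) / ε}.Finite := by
    refine Set.Finite.subset (ball_finite G hconn N hadj x₀ ⌈(M + M₀)/ε⌉₊) ?_
    intro x hx
    simp only [Set.mem_setOf_eq] at hx ⊢
    have : (G.dist x x₀ : ℝ) ≤ (⌈(M + M₀)/ε⌉₊ : ℝ) := le_trans hx (Nat.le_ceil _)
    exact_mod_cast this
  set S : Finset V := hfin.toFinset with hSdef
  have hmemS : ∀ x, x ∈ S ↔ ρ x ≤ (M + M₀) / ε := by
    intro x; rw [hSdef, Set.Finite.mem_toFinset]; rfl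
  have hx₀S : x₀ ∈ S := by
    rw [hmemS]
    have : ρ x₀ = 0 := by simp [hρdef]
    rw [this]
    positivity
  have hSne : S.Nonempty := ⟨x₀, hx₀S⟩
  set w : ℝ → V → ℝ := fun t x => u t x - (M₀ + ε * (ρ x + (C+1)*t + 1)) with hwdef
  have hout : ∀ t ∈ Set.Icc (0:ℝ) T, ∀ x ∉ S, w t x ≤ -ε := by
    intro t ht x hx
    rw [hmemS] at hx
    push_neg at hx
    have h2 : M + M₀ < ε * ρ x := by
      rw [div_lt_iff₀ hε] at hx; linarith [hx]
    have h3 : u t x ≤ M := (abs_le.mp (hM t ht x)).2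
    have h4 : 0 ≤ (C+1)*t := mul_nonneg (by linarith) ht.1
    simp only [hwdef]
    nlinarith
  have hwc : ∀ x, Continuous fun t => w t x := by
    intro x
    apply (hcont x).sub
    fun_prop
  set F : ℝ → ℝ := fun t => S.sup' hSne (fun x => w t x) with hFdef
  have hFc : Continuous F := by
    apply Continuous.finset_sup'_apply hSne (fun x _ => hwc x)
  obtain ⟨t', ht'mem, ht'max⟩ :=
    isCompact_Icc.exists_isMaxOn (Set.nonempty_Icc.mpr hT.le) hFc.continuousOn
  obtain ⟨x', hx'S, hx'⟩ := Finset.exists_mem_eq_sup' hSne (fun x => w t' x)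
  have hmaxS : ∀ t ∈ Set.Icc (0:ℝ) T, ∀ x ∈ S, w t x ≤ w t' x' := by
    intro t ht x hx
    calc w t x ≤ F t := Finset.le_sup' _ hx
    _ ≤ F t' := ht'max ht
    _ = w t' x' := hx'
  have hkey : w t' x' ≤ 0 := by
    by_contra hpos
    push_neg at hpos
    have hglobal : ∀ y, w t' y ≤ w t' x' := by
      intro y
      by_cases hy : y ∈ S
      · exact hmaxS t' ht'mem y hy
      · linarith [hout t' ht'mem y hy]
    have ht'pos : 0 < t' := by
      rcases lt_or_eq_of_le ht'mem.1 with h | h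
      · exact h
      · exfalso
        have h1 : w 0 x' ≤ -ε := by
          simp only [hwdef]
          have := hu0 x'
          nlinarith [hρ0 x']
        rw [← h] at hpos
        linarith
    have hder : HasDerivAt (fun s => w s x') (glap N μ d (u t') x' - ε * (C+1)) t' := by
      have h1 := hheat x' t' ht'pos.le
      have h2 : HasDerivAt (fun s : ℝ => M₀ + ε * (ρ x' + (C+1)*s + 1)) (ε*(C+1)) t' := by
        have he : (fun s : ℝ => M₀ + ε * (ρ x' + (C+1)*s + 1))
            = fun s => (ε*(C+1))*s + (M₀ + ε*(ρ x' + 1)) := by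
          funext s; ring
        rw [he]
        simpa using ((hasDerivAt_id t').const_mul (ε*(C+1))).add_const (M₀ + ε*(ρ x'+1))
      exact h1.sub h2
    have hmax' : IsMaxOn (fun s => w s x') (Set.Icc (0:ℝ) T) t' :=
      fun s hs => hmaxS s hs x' hx'S
    have hsign := deriv_nonneg_of_isMaxOn_Icc ht'mem ht'pos hder hmax'
    have hsplit : glap N μ d (u t') x' = glap N μ d (fun y => w t' y) x' + ε * glap N μ d ρ x' := by
      simp only [glap]
      have e1 : ∑ y ∈ N x', μ x' y * (u t' y - u t' x')
          = ∑ y ∈ N x', (μ x' y * (w t' y - w t' x') + ε * (μ x' y * (ρ y - ρ x'))) :=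
        Finset.sum_congr rfl (fun y _ => by simp only [hwdef]; ring)
      rw [e1, Finset.sum_add_distrib, ← Finset.mul_sum]
      ring
    have h1 : glap N μ d (fun y => w t' y) x' ≤ 0 := by
      simp only [glap]
      apply mul_nonpos_of_nonneg_of_nonpos (one_div_nonneg.mpr (hdpos x').le)
      exact Finset.sum_nonpos fun y _ =>
        mul_nonpos_of_nonneg_of_nonpos (hnn _ _) (sub_nonpos.mpr (hglobal y))
    have h2 : glap N μ d ρ x' ≤ C := hH x'
    nlinarith
  intro t ht x
  have hgoal : w t x ≤ 0 := by
    by_cases hx : x ∈ S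
    · linarith [hmaxS t ht x hx]
    · linarith [hout t ht x hx]
  simp only [hwdef] at hgoal
  linarith

/-- maximum principle for bounded solutions of the heat equation
on a graph whose mean curvature `H(x) = Δd(·,x₀)(x)` is bounded above. -/
theorem stmt12 {V : Type*} (G : SimpleGraph V) [DecidableRel G.Adj]
    (hinf : Infinite V) (hconn : G.Connected)
    (N : V → Finset V) (μ : V → V → ℝ) (d : V → ℝ)
    (hadj : ∀ x y, y ∈ N x ↔ G.Adj x y)
    (hsym : ∀ x y, μ x y = μ y x) (hnn : ∀ x y, 0 ≤ μ x y)
    (hd : ∀ x, d x = ∑ y ∈ N x, μ x y) (hdpos : ∀ x, 0 < d x)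
    (x₀ : V) (C : ℝ) (hC : 0 ≤ C)
    (hH : ∀ x, glap N μ d (fun y => (G.dist y x₀ : ℝ)) x ≤ C)
    (u : ℝ → V → ℝ)
    (hheat : ∀ x, ∀ t ≥ (0 : ℝ), HasDerivAt (fun s => u s x) (glap N μ d (u t) x) t)
    (hcont : ∀ x, Continuous fun t => u t x)
    (hbdd : ∀ T > (0 : ℝ), ∃ M, ∀ t ∈ Set.Icc (0 : ℝ) T, ∀ x, |u t x| ≤ M)
    (M₀ : ℝ) (hM₀ : ∀ x, |u 0 x| ≤ M₀) :
    ∀ t ≥ (0 : ℝ), ∀ x, |u t x| ≤ M₀ := by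
  intro t ht x
  rcases lt_or_eq_of_le ht with htpos | h0
  · obtain ⟨M, hM⟩ := hbdd t htpos
    have hM₀nn : 0 ≤ M₀ := le_trans (abs_nonneg _) (hM₀ x)
    have h1 : u t x ≤ M₀ :=
      core_max G hconn N μ d hadj hnn hdpos x₀ C hC hH u hheat hcont
        t htpos M hM M₀ hM₀nn (fun y => (abs_le.mp (hM₀ y)).2) t ⟨ht, le_refl t⟩ x
    have hheat' : ∀ x, ∀ t ≥ (0:ℝ),
        HasDerivAt (fun s => -(u s x)) (glap N μ d (fun y => -(u t y)) x) t := by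
      intro z s hs
      have hg : glap N μ d (fun y => -(u s y)) z = -(glap N μ d (u s) z) := by
        simp only [glap]
        rw [show ∑ y ∈ N z, μ z y * (-u s y - -u s z)
            = ∑ y ∈ N z, -(μ z y * (u s y - u s z)) from
          Finset.sum_congr rfl (fun y _ => by ring), Finset.sum_neg_distrib, mul_neg]
      rw [hg]
      exact (hheat z s hs).neg
    have h2 : -(u t x) ≤ M₀ :=
      core_max G hconn N μ d hadj hnn hdpos x₀ C hC hH (fun s y => -(u s y)) hheat'
        (fun z => (hcont z).neg)
        t htpos M (fun s hs z => by simpa [abs_neg] using hM s hs z) M₀ hM₀nn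
        (fun y => neg_le.mpr (abs_le.mp (hM₀ y)).1) t ⟨ht, le_refl t⟩ x
    exact abs_le.mpr ⟨by linarith, h1⟩
  · rw [← h0]
    exact hM₀ x
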